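/- Let r ≥ 3 and let ℓ, h be elements of a commutative ring (representing c₁(L) and c₁(H) in the cohomology ring of a surface) with ℓ² = 0 and (r-2)ℓh = (r-1)h². Set c₁ = ℓ + (r-1)h and c₂ = (r-1)ℓh + ((r-1)(r-2)/2)h². Then c₁² = r(r-1)ℓh and (2r(r-1)/(r²-2r+2))·c₂ = c₁², i.e. (r²-2r+2)c₁² - 2r(r-1)c₂ = 0. -/
import Mathlib


/-- in the cohomology ring of the surface (a commutative ring), with
`ℓ² = 0` and `(r-2)ℓh = (r-1)h²`, setting `c₁ = ℓ + (r-1)h` and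
`c₂ = (r-1)ℓh + ((r-1)(r-2)/2)h²`, one has `c₁² = r(r-1)ℓh` and
`(r²-2r+2)c₁² - 2r(r-1)c₂ = 0` (equality in Lübke's inequality). -/
theorem stmt_5 (r : ℕ) (hr : 3 ≤ r) {R : Type*} [CommRing R] (ℓ h : R)
    (hℓ : ℓ ^ 2 = 0) (hss : (r - 2) • (ℓ * h) = (r - 1) • (h ^ 2))
    (c₁ c₂ : R) (hc₁ : c₁ = ℓ + (r - 1) • h)
    (hc₂ : c₂ = (r - 1) • (ℓ * h) + ((r - 1) * (r - 2) / 2) • h ^ 2) :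
    c₁ ^ 2 = (r * (r - 1)) • (ℓ * h) ∧
      ((r : ℤ) ^ 2 - 2 * r + 2) • c₁ ^ 2 - (2 * (r : ℤ) * (r - 1)) • c₂ = 0 := by
  obtain ⟨k, rfl⟩ := Nat.exists_eq_add_of_le hr
  have e1 : 3 + k - 1 = k + 2 := by omega
  have e2 : 3 + k - 2 = k + 1 := by omega
  simp only [e1, e2] at hss hc₁ hc₂ ⊢
  set m : ℕ := (k + 2) * (k + 1) / 2 with hm
  have hdvd : 2 ∣ (k + 2) * (k + 1) := by
    rw [mul_comm]
    exact (Nat.even_mul_succ_self (k + 1)).two_dvd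
  have hm2 : 2 * m = (k + 2) * (k + 1) := Nat.mul_div_cancel' hdvd
  have hssR : ((k : R) + 1) * (ℓ * h) = ((k : R) + 2) * h ^ 2 := by
    have := hss
    simp only [nsmul_eq_mul] at this
    push_cast at this
    exact this
  have hmR : (2 : R) * (m : R) = ((k : R) + 2) * ((k : R) + 1) := by
    exact_mod_cast congrArg (Nat.cast : ℕ → R) hm2
  subst hc₁ hc₂
  simp only [nsmul_eq_mul, zsmul_eq_mul]
  push_cast
  constructor
  · linear_combination hℓ - ((k : R) + 2) * hssR
  · linear_combination (((k : R) + 2) ^ 2 + 1) * hℓ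
      - 2 * ((k : R) + 2) * hssR - ((k : R) + 2) * ((k : R) + 3) * h ^ 2 * hmR
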